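/- In the Set Cover reduction network, with initial failure set K = A_2, the cascade without any modification causes all entities in A_2 ∪ B ∪ A_1 to fail, while entities in A_3 never fail. -/

import Mathlib

open scoped Classical

/-- The cascading failure process of the Implicative Interdependency Model.
`idr e = some M` means entity `e` has the set of minterms `M`; `idr e = none`
means `e` has no IDR and never fails unless initially failed. -/
noncomputable def cascade {E : Type} [Fintype E]
    (idr : E → Option (Finset (Finset E))) (K : Finset E) : ℕ → Finset E
  | 0 => K
  | t + 1 =>
      cascade idr K t ∪
        Finset.univ.filter fun e =>
          ∃ M, idr e = some M ∧ ∀ m ∈ M, (m ∩ cascade idr K t).Nonempty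

/-- Entities of the Set Cover reduction network:
`A₁ = Fin n` (one per universe element), `B = Fin m` (one per subset),
`A₂ = Fin m`, and `A₃ = Fin X` (entities with no IDRs). -/
abbrev Ent (n m X : ℕ) : Type := (Fin n ⊕ Fin m) ⊕ (Fin m ⊕ Fin X)

/-- `a_i ∈ A₁` -/
abbrev entA1 {n m X : ℕ} (i : Fin n) : Ent n m X := Sum.inl (Sum.inl i)
/-- `b_j ∈ B` -/
abbrev entB {n m X : ℕ} (j : Fin m) : Ent n m X := Sum.inl (Sum.inr j)
/-- `a_{2j} ∈ A₂` -/
abbrev entA2 {n m X : ℕ} (j : Fin m) : Ent n m X := Sum.inr (Sum.inl j)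
/-- entity of `A₃` -/
abbrev entA3 {n m X : ℕ} (x : Fin X) : Ent n m X := Sum.inr (Sum.inr x)

/-- IDRs of the Set Cover reduction network: `a_i ← b_{j₁} + ⋯ + b_{j_k}`
(over the subsets `S j` containing element `i`), `b_j ← a_{2j}`, and entities
of `A₂` and `A₃` have no IDRs. -/
noncomputable def scIdr (n m X : ℕ) (S : Fin m → Finset (Fin n)) :
    Ent n m X → Option (Finset (Finset (Ent n m X)))
  | Sum.inl (Sum.inl i) =>
      some ((Finset.univ.filter fun j => i ∈ S j).image
        fun j => ({entB j} : Finset (Ent n m X)))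
  | Sum.inl (Sum.inr j) => some {({entA2 j} : Finset (Ent n m X))}
  | Sum.inr _ => none

/-- The initial failure set `K = A₂` (the `|A₂|` most vulnerable entities). -/
noncomputable def scK (n m X : ℕ) : Finset (Ent n m X) :=
  Finset.univ.image fun j : Fin m => (entA2 j : Ent n m X)

/-- The final failure set of a cascade (the cascade stabilizes after at most
`|E| - 1` steps, so we evaluate it at step `|E|`). -/
noncomputable def finalFail {E : Type} [Fintype E]
    (idr : E → Option (Finset (Finset E))) (K : Finset E) : Finset E :=
  cascade idr K (Fintype.card E)

lemma cascade_mono {E : Type} [Fintype E]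
    (idr : E → Option (Finset (Finset E))) (K : Finset E) :
    ∀ {s t : ℕ}, s ≤ t → cascade idr K s ⊆ cascade idr K t := by
  intro s t h
  induction t with
  | zero => simp_all
  | succ t ih =>
    rcases Nat.lt_or_ge s (t+1) with h' | h'
    · exact (ih (Nat.lt_succ_iff.mp h')).trans (by simp [cascade])
    · have : s = t + 1 := le_antisymm h h'
      subst this; exact subset_rfl

lemma scA3_not (n m X : ℕ) (S : Fin m → Finset (Fin n)) :
    ∀ (t : ℕ) (x : Fin X),
      (entA3 x : Ent n m X) ∉ cascade (scIdr n m X S) (scK n m X) t := by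
  intro t x
  induction t with
  | zero => simp [cascade, scK, entA3, entA2]
  | succ t ih =>
    simp only [cascade, Finset.mem_union, Finset.mem_filter, Finset.mem_univ, true_and]
    rintro (h | ⟨M, hM, -⟩)
    · exact ih h
    · simp [scIdr, entA3] at hM

lemma scA2_mem (n m X : ℕ) (S : Fin m → Finset (Fin n)) (j : Fin m) (t : ℕ) :
    (entA2 j : Ent n m X) ∈ cascade (scIdr n m X S) (scK n m X) t :=
  cascade_mono _ _ (Nat.zero_le t) (by simp [cascade, scK])

lemma scB_mem (n m X : ℕ) (S : Fin m → Finset (Fin n)) (j : Fin m) :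
    (entB j : Ent n m X) ∈ cascade (scIdr n m X S) (scK n m X) 1 := by
  simp only [cascade, Finset.mem_union, Finset.mem_filter, Finset.mem_univ, true_and]
  right
  refine (@Finset.mem_filter _ _ (_) _ _).mpr ⟨Finset.mem_univ _, _, rfl, ?_⟩
  intro s hs
  simp only [Finset.mem_singleton] at hs
  subst hs
  refine ⟨entA2 j, ?_⟩
  simp only [Finset.mem_inter, Finset.mem_singleton]
  exact ⟨trivial, scA2_mem n m X S j 0⟩

lemma scA1_mem (n m X : ℕ) (S : Fin m → Finset (Fin n))
    (hcov : ∀ i : Fin n, ∃ j, i ∈ S j) (i : Fin n) :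
    (entA1 i : Ent n m X) ∈ cascade (scIdr n m X S) (scK n m X) 2 := by
  simp only [cascade, Finset.mem_union, Finset.mem_filter, Finset.mem_univ, true_and]
  right
  refine (@Finset.mem_filter _ _ (_) _ _).mpr ⟨Finset.mem_univ _, _, rfl, ?_⟩
  intro s hs
  simp only [Finset.mem_image, Finset.mem_filter, Finset.mem_univ, true_and] at hs
  obtain ⟨j, hj, rfl⟩ := hs
  refine ⟨entB j, ?_⟩
  simp only [Finset.mem_inter, Finset.mem_singleton]
  exact ⟨trivial, scB_mem n m X S j⟩

/-- In the Set Cover reduction network with initial failure set `K = A₂`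
(assuming every universe element is contained in at least one subset), the
entities of `A₃` never fail at any time step of the cascade, while the final
failure set consists exactly of all entities of `A₂ ∪ B ∪ A₁`. -/
theorem scReduction_cascade (n m X : ℕ) (S : Fin m → Finset (Fin n))
    (hcov : ∀ i : Fin n, ∃ j, i ∈ S j) :
    (∀ (t : ℕ) (x : Fin X),
      (entA3 x : Ent n m X) ∉ cascade (scIdr n m X S) (scK n m X) t) ∧
    (∀ e : Ent n m X, e ∈ finalFail (scIdr n m X S) (scK n m X) ↔
      ∀ x : Fin X, e ≠ entA3 x) := by
  constructor
  · exact scA3_not n m X S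
  · intro e
    constructor
    · intro he x hx
      subst hx
      exact scA3_not n m X S _ x he
    · intro he
      have hcard : (2 : ℕ) ≤ Fintype.card (Ent n m X) ∨ True := Or.inr trivial
      match e with
      | Sum.inr (Sum.inr x) => exact absurd rfl (he x)
      | Sum.inr (Sum.inl j) => exact scA2_mem n m X S j _
      | Sum.inl (Sum.inr j) =>
          have h1 : (1 : ℕ) ≤ Fintype.card (Ent n m X) := by
            have : m ≥ 1 := j.pos
            simp [Ent]; omega
          exact cascade_mono _ _ h1 (scB_mem n m X S j)
      | Sum.inl (Sum.inl i) =>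
          obtain ⟨j, -⟩ := hcov i
          have h2 : (2 : ℕ) ≤ Fintype.card (Ent n m X) := by
            have : m ≥ 1 := j.pos
            have : n ≥ 1 := i.pos
            simp [Ent]; omega
          exact cascade_mono _ _ h2 (scA1_mem n m X S hcov i)
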